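/- If μ is the weight of some highest weight valued-set tableau of shape λ (equivalently the multiplicity V_λ^μ is nonzero), then ℓ(λ) = ℓ(μ). -/

import Mathlib

/-- Scanning left to right (`+` for letter `i`, `-` for `i+1`, canceling ordered pairs
`-+`), returns (number of uncanceled `+`, number of uncanceled `-`). -/
def sigFold (i : ℕ) (w : List ℕ) : ℕ × ℕ :=
  w.foldl (fun pm a =>
    if a = i then (if 0 < pm.2 then (pm.1, pm.2 - 1) else (pm.1 + 1, pm.2))
    else if a = i + 1 then (pm.1, pm.2 + 1) else pm) (0, 0)

/-- Position of the rightmost uncanceled `+` (a letter `i`). -/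
def fPos (i : ℕ) (w : List ℕ) : Option ℕ :=
  ((List.range w.length).filter
    (fun j => decide (w[j]? = some i ∧ (sigFold i (w.take j)).2 = 0))).getLast?

/-- Position of the leftmost uncanceled `-` (a letter `i+1`). -/
def ePos (i : ℕ) (w : List ℕ) : Option ℕ :=
  ((List.range w.length).filter
    (fun j => decide (w[j]? = some (i + 1) ∧ (sigFold i (w.drop (j + 1))).1 = 0))).head?

/-- `sh` is a partition: weakly decreasing list of positive integers. -/
def IsPartition (sh : List ℕ) : Prop :=
  sh.Pairwise (· ≥ ·) ∧ ∀ x ∈ sh, 0 < x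

/-- The box in row `r`, column `c` (both 0-indexed) belongs to the Young diagram of `sh`. -/
abbrev InShape (sh : List ℕ) (r c : ℕ) : Prop := c < sh.getD r 0

/-- Number of boxes in column `c` of the shape `sh`. -/
def colHeight (sh : List ℕ) (c : ℕ) : ℕ := (sh.filter (fun p => decide (c < p))).length

/-! Valued-set tableaux. -/

/-- A semistandard Young tableau with each row partitioned into contiguous groups:
`entry` gives the entries, and `start r c = true` marks that box `(r, c)` is the
leftmost box (the buoy) of its group. -/
structure VST where
  entry : ℕ → ℕ → ℕ
  start : ℕ → ℕ → Bool

/-- A valued-set tableau of shape `sh` with entries in `{1, …, n}`: a semistandard Young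
tableau of shape `sh` whose rows are split into contiguous groups of equal entries. -/
def IsVST (n : ℕ) (sh : List ℕ) (T : VST) : Prop :=
  (∀ r c, ¬ InShape sh r c → T.entry r c = 0 ∧ T.start r c = false) ∧
  (∀ r c, InShape sh r c → 1 ≤ T.entry r c ∧ T.entry r c ≤ n) ∧
  (∀ r c, InShape sh r (c + 1) → T.entry r c ≤ T.entry r (c + 1)) ∧
  (∀ r c, InShape sh (r + 1) c → T.entry r c < T.entry (r + 1) c) ∧
  (∀ r, InShape sh r 0 → T.start r 0 = true) ∧
  (∀ r c, InShape sh r (c + 1) → T.start r (c + 1) = false →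
    T.entry r (c + 1) = T.entry r c)

/-- Tagged buoy reading word: the buoy entries, columns left to right, bottom to top
within each column; each letter is tagged with its box. -/
def vstTagged (sh : List ℕ) (T : VST) : List (ℕ × ℕ × ℕ) :=
  ((List.range (sh.headD 0)).map (fun c =>
    (List.range (colHeight sh c)).reverse.filterMap (fun r =>
      if T.start r c then some (T.entry r c, r, c) else none))).flatten

/-- The (buoy) reading word of a valued-set tableau. -/
def vstWord (sh : List ℕ) (T : VST) : List ℕ := (vstTagged sh T).map (·.1)

/-- The column of the anchor (rightmost box) of the group whose buoy is in box `(r, c)`. -/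
def anchorCol (sh : List ℕ) (T : VST) (r c : ℕ) : ℕ :=
  (((List.range (sh.getD r 0)).filter (fun c' =>
    decide (c ≤ c' ∧ (¬ InShape sh r (c' + 1) ∨ T.start r (c' + 1) = true)))).headD c)

/-- The crystal operator `f_i` on valued-set tableaux, acting on the group `g` of the
rightmost uncanceled `+`: if the entry immediately below the anchor of `g` is an `i+1`,
move the divider between `g` and the group immediately to the left of `g` one step down;
otherwise change every `i` in `g` to an `i+1`. -/
def vstF (sh : List ℕ) (i : ℕ) (T : VST) : Option VST :=
  (fPos i (vstWord sh T)).map (fun j =>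
    let t := (vstTagged sh T).getD j (0, 0, 0)
    let r := t.2.1
    let cs := t.2.2
    let ce := anchorCol sh T r cs
    if InShape sh (r + 1) ce ∧ T.entry (r + 1) ce = i + 1 then
      { T with start := fun r' c' =>
          if r' = r ∧ c' = cs then false
          else if r' = r + 1 ∧ c' = cs then true
          else T.start r' c' }
    else
      { T with entry := fun r' c' =>
          if r' = r ∧ cs ≤ c' ∧ c' ≤ ce then i + 1 else T.entry r' c' })

/-- The crystal operator `e_i` on valued-set tableaux, acting on the group `g` of the
leftmost uncanceled `-`: if the entry immediately above the anchor of `g` is an `i`,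
move the divider between `g` and the group immediately to the left of `g` one step up;
otherwise change every `i+1` in `g` to an `i`. -/
def vstE (sh : List ℕ) (i : ℕ) (T : VST) : Option VST :=
  (ePos i (vstWord sh T)).map (fun j =>
    let t := (vstTagged sh T).getD j (0, 0, 0)
    let r := t.2.1
    let cs := t.2.2
    let ce := anchorCol sh T r cs
    if 0 < r ∧ T.entry (r - 1) ce = i then
      { T with start := fun r' c' =>
          if r' = r ∧ c' = cs then false
          else if r' + 1 = r ∧ c' = cs then true
          else T.start r' c' }
    else
      { T with entry := fun r' c' =>
          if r' = r ∧ cs ≤ c' ∧ c' ≤ ce then i else T.entry r' c' })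

/-- A valued-set tableau is highest weight if it is killed by all raising operators. -/
def VstHW (sh : List ℕ) (T : VST) : Prop := ∀ i, 1 ≤ i → vstE sh i T = none


section Aux

/-- If `i` does not occur in `w`, the `+`-count of the signature fold is unchanged. -/
lemma sigFold_aux_fst (i : ℕ) : ∀ (w : List ℕ), i ∉ w → ∀ pm : ℕ × ℕ,
    (w.foldl (fun pm a =>
      if a = i then (if 0 < pm.2 then (pm.1, pm.2 - 1) else (pm.1 + 1, pm.2))
      else if a = i + 1 then (pm.1, pm.2 + 1) else pm) pm).1 = pm.1 := by
  intro w
  induction w with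
  | nil => intro _ pm; simp
  | cons a w ih =>
    intro h pm
    simp only [List.mem_cons, not_or] at h
    rw [List.foldl_cons, if_neg (fun hh => h.1 hh.symm)]
    by_cases ha : a = i + 1
    · rw [if_pos ha]; exact ih h.2 _
    · rw [if_neg ha]; exact ih h.2 _

lemma getD_anti {l : List ℕ} (h : l.Pairwise (· ≥ ·)) {i j : ℕ} (hij : i ≤ j) :
    l.getD j 0 ≤ l.getD i 0 := by
  by_cases hj : j < l.length
  · have hi : i < l.length := lt_of_le_of_lt hij hj
    rw [List.getD_eq_getElem l 0 hi, List.getD_eq_getElem l 0 hj]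
    rcases eq_or_lt_of_le hij with rfl | hlt
    · exact le_refl _
    · exact List.pairwise_iff_getElem.mp h i j hi hj hlt
  · rw [List.getD_eq_default l 0 (by omega)]
    exact Nat.zero_le _

lemma lt_colHeight_iff {l : List ℕ} (h : l.Pairwise (· ≥ ·)) (c : ℕ) :
    ∀ r : ℕ, r < colHeight l c ↔ c < l.getD r 0 := by
  induction l with
  | nil => intro r; simp [colHeight]
  | cons a l ih =>
    obtain ⟨ha, hs⟩ := List.pairwise_cons.mp h
    intro r
    by_cases hca : c < a
    · have hch : colHeight (a :: l) c = colHeight l c + 1 := by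
        simp [colHeight, List.filter_cons, hca]
      cases r with
      | zero => simp [hch, hca]
      | succ r =>
        rw [hch]
        simpa using ih hs r
    · have hnil : List.filter (fun p => decide (c < p)) (a :: l) = [] := by
        rw [List.filter_eq_nil_iff]
        intro x hx
        simp only [List.mem_cons] at hx
        rcases hx with rfl | hx
        · simpa using hca
        · have := ha x hx
          simp only [decide_eq_true_eq]
          omega
      have hch : colHeight (a :: l) c = 0 := by simp [colHeight, hnil]
      rw [hch]
      cases r with
      | zero => simpa using hca
      | succ r =>
        simp only [List.getD_cons_succ]
        have : l.getD r 0 ≤ a := by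
          by_cases hr : r < l.length
          · rw [List.getD_eq_getElem l 0 hr]
            exact ha _ (List.getElem_mem hr)
          · rw [List.getD_eq_default l 0 (by omega)]; omega
        constructor
        · omega
        · intro hc; omega

/-- Reading order relation on tagged letters. -/
def rdR (t u : ℕ × ℕ × ℕ) : Prop := t.2.2 < u.2.2 ∨ (t.2.2 = u.2.2 ∧ u.2.1 < t.2.1)

lemma mem_vstTagged_iff {sh : List ℕ} {T : VST} {t : ℕ × ℕ × ℕ} :
    t ∈ vstTagged sh T ↔ ∃ r c, c < sh.headD 0 ∧ r < colHeight sh c ∧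
      T.start r c = true ∧ t = (T.entry r c, r, c) := by
  constructor
  · intro ht
    rw [vstTagged, List.mem_flatten] at ht
    obtain ⟨l, hl, htl⟩ := ht
    rw [List.mem_map] at hl
    obtain ⟨c, hc, rfl⟩ := hl
    rw [List.mem_filterMap] at htl
    obtain ⟨r, hr, hrt⟩ := htl
    rw [Option.ite_none_right_eq_some] at hrt
    refine ⟨r, c, by simpa using hc, by simpa using hr, hrt.1, ?_⟩
    exact (Option.some_inj.mp hrt.2).symm
  · rintro ⟨r, c, hc, hr, hst, rfl⟩
    rw [vstTagged, List.mem_flatten]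
    refine ⟨_, List.mem_map.mpr ⟨c, by simpa using hc, rfl⟩, ?_⟩
    rw [List.mem_filterMap]
    exact ⟨r, by simpa using hr, by rw [Option.ite_none_right_eq_some]; exact ⟨hst, rfl⟩⟩

lemma tagged_pairwise (sh : List ℕ) (T : VST) : List.Pairwise rdR (vstTagged sh T) := by
  rw [vstTagged, List.pairwise_flatten]
  have hmem : ∀ (c : ℕ) (t : ℕ × ℕ × ℕ),
      t ∈ (List.range (colHeight sh c)).reverse.filterMap (fun r =>
        if T.start r c then some (T.entry r c, r, c) else none) →
      t.2.2 = c ∧ t.2.1 < colHeight sh c := by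
    intro c t ht
    rw [List.mem_filterMap] at ht
    obtain ⟨r, hr, hrt⟩ := ht
    rw [Option.ite_none_right_eq_some] at hrt
    obtain ⟨-, ht⟩ := hrt
    cases Option.some_inj.mp ht
    exact ⟨rfl, by simpa using hr⟩
  constructor
  · intro l hl
    rw [List.mem_map] at hl
    obtain ⟨c, hc, rfl⟩ := hl
    rw [List.pairwise_filterMap, List.pairwise_reverse]
    refine List.pairwise_lt_range.imp ?_
    intro r r' hrr' b hb b' hb'
    rw [Option.ite_none_right_eq_some] at hb hb'
    cases Option.some_inj.mp hb.2
    cases Option.some_inj.mp hb'.2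
    exact Or.inr ⟨rfl, hrr'⟩
  · rw [List.pairwise_map]
    refine List.pairwise_lt_range.imp ?_
    intro c c' hcc' x hx y hy
    exact Or.inl (by rw [(hmem c x hx).1, (hmem c' y hy).1]; exact hcc')

lemma hw_exists_after {sh : List ℕ} {T : VST} (hhw : VstHW sh T) {i j : ℕ} (hi : 1 ≤ i)
    (hj : (vstWord sh T)[j]? = some (i + 1)) :
    ∃ j', j < j' ∧ (vstWord sh T)[j']? = some i := by
  have hE : ePos i (vstWord sh T) = none := by
    have h := hhw i hi
    rw [vstE] at h
    cases hE : ePos i (vstWord sh T) with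
    | none => rfl
    | some v => rw [hE] at h; simp at h
  rw [ePos, List.head?_eq_none_iff, List.filter_eq_nil_iff] at hE
  have hjlen : j < (vstWord sh T).length := by
    by_contra hc
    rw [List.getElem?_eq_none (by omega)] at hj
    cases hj
  have hns := hE j (List.mem_range.mpr hjlen)
  simp only [decide_eq_true_eq, not_and] at hns
  have hsig := hns hj
  have hmem : i ∈ (vstWord sh T).drop (j + 1) := by
    by_contra hni
    exact hsig (sigFold_aux_fst i _ hni (0, 0))
  obtain ⟨d, hd, hdi⟩ := List.getElem_of_mem hmem
  refine ⟨j + 1 + d, by omega, ?_⟩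
  have hlen : j + 1 + d < (vstWord sh T).length := by
    rw [List.length_drop] at hd; omega
  rw [List.getElem?_eq_getElem hlen]
  rw [List.getElem_drop] at hdi
  rw [hdi]

section Main

variable {n : ℕ} {lam : List ℕ} {T : VST}

lemma inShape_of_tagged (hlam : IsPartition lam) {r c : ℕ}
    (hr : r < colHeight lam c) : InShape lam r c :=
  (lt_colHeight_iff hlam.1 c r).mp hr

lemma rowMono (hT : IsVST n lam T) {r c1 c2 : ℕ} (h : c1 ≤ c2)
    (hc : InShape lam r c2) : T.entry r c1 ≤ T.entry r c2 := by
  induction c2, h using Nat.le_induction with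
  | base => exact le_refl _
  | succ c2 h ih =>
    have hc2 : InShape lam r c2 := by unfold InShape at hc ⊢; omega
    exact le_trans (ih hc2) (hT.2.2.1 r c2 hc)

lemma colMono (hlam : IsPartition lam) (hT : IsVST n lam T) (c : ℕ) :
    ∀ r2, InShape lam r2 c → ∀ r1, r1 ≤ r2 → T.entry r1 c + (r2 - r1) ≤ T.entry r2 c := by
  intro r2
  induction r2 with
  | zero =>
    intro _ r1 h1
    have : r1 = 0 := by omega
    subst this; simp
  | succ r2 ih =>
    intro hc r1 h1
    rcases Nat.eq_or_lt_of_le h1 with heq | hlt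
    · subst heq; simp
    · have hc2 : InShape lam r2 c := by
        have := getD_anti hlam.1 (show r2 ≤ r2 + 1 by omega)
        unfold InShape at hc ⊢; omega
      have ha := ih hc2 r1 (by omega)
      have hb := hT.2.2.2.1 r2 c hc
      omega

lemma entry_ge (hlam : IsPartition lam) (hT : IsVST n lam T) {r c : ℕ}
    (hc : InShape lam r c) : r + 1 ≤ T.entry r c := by
  have h0 : InShape lam 0 c := by
    have := getD_anti hlam.1 (Nat.zero_le r)
    unfold InShape at hc ⊢; omega
  have h1 := (hT.2.1 0 c h0).1
  have h2 := colMono hlam hT c r hc 0 (Nat.zero_le r)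
  omega

/-- In a highest-weight VST, every buoy letter `k` lies in row `k - 1`. -/
lemma rowEq (hlam : IsPartition lam) (hT : IsVST n lam T) (hhw : VstHW lam T) :
    ∀ k, ∀ t ∈ vstTagged lam T, t.1 = k → t.2.1 + 1 = k := by
  intro k
  induction k using Nat.strong_induction_on with
  | _ k ih =>
    intro t ht htk
    obtain ⟨r, c, hc, hrh, hst, rfl⟩ := mem_vstTagged_iff.mp ht
    simp only at htk ⊢
    have hshape : InShape lam r c := inShape_of_tagged hlam hrh
    have hge : r + 1 ≤ T.entry r c := entry_ge hlam hT hshape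
    by_contra hne
    have hrk : r + 2 ≤ k := by omega
    set i := k - 1 with hidef
    have hi : 1 ≤ i := by omega
    obtain ⟨j, hjlen, hjt⟩ := List.getElem_of_mem ht
    have hwlen : (vstWord lam T).length = (vstTagged lam T).length := by
      simp only [vstWord, List.length_map]
    have hwj : (vstWord lam T)[j]? = some (i + 1) := by
      rw [List.getElem?_eq_getElem (by omega)]
      simp only [vstWord, List.getElem_map, hjt]
      simp only [Option.some_inj]
      omega
    obtain ⟨j', hjj', hwj'⟩ := hw_exists_after hhw hi hwj
    have hj'len : j' < (vstTagged lam T).length := by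
      by_contra hcon
      rw [List.getElem?_eq_none (by omega)] at hwj'
      cases hwj'
    set t' := (vstTagged lam T)[j'] with ht'def
    have ht'1 : t'.1 = i := by
      rw [List.getElem?_eq_getElem (by omega)] at hwj'
      simp only [vstWord, List.getElem_map] at hwj'
      exact Option.some_inj.mp hwj'
    have ht'mem : t' ∈ vstTagged lam T := List.getElem_mem hj'len
    have hr' : t'.2.1 + 1 = i := ih i (by omega) t' ht'mem ht'1
    obtain ⟨r', c', hc', hrh', hst', ht'eq⟩ := mem_vstTagged_iff.mp ht'mem
    have hR : rdR ((vstTagged lam T)[j]) ((vstTagged lam T)[j']) :=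
      List.pairwise_iff_getElem.mp (tagged_pairwise lam T) j j' hjlen hj'len hjj'
    rw [hjt, ← ht'def, ht'eq] at hR
    rw [ht'eq] at hr' ht'1
    simp only at hr' ht'1
    unfold rdR at hR
    simp only at hR
    have hrr' : r ≤ r' := by omega
    have hcc' : c < c' := by
      rcases hR with h | ⟨_, h⟩
      · exact h
      · omega
    have hshape' : InShape lam r' c' := inShape_of_tagged hlam hrh'
    have hshaperc' : InShape lam r c' := by
      have := getD_anti hlam.1 hrr'
      unfold InShape at hshape' ⊢; omega
    have h1 : T.entry r c ≤ T.entry r c' := rowMono hT (le_of_lt hcc') hshaperc'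
    have h2 : T.entry r c' + (r' - r) ≤ T.entry r' c' := colMono hlam hT c' r' hshape' r hrr'
    omega

end Main

end Aux

/-- If `μ` is the weight of some highest weight valued-set tableau of
shape `λ`, then `ℓ(λ) = ℓ(μ)`. -/
theorem vst_highest_weight_same_length
    (n : ℕ) (lam : List ℕ) (hlam : IsPartition lam)
    (T : VST) (hT : IsVST n lam T) (hhw : VstHW lam T)
    (mu : List ℕ) (hmu : IsPartition mu)
    (hwt : ∀ i, (vstWord lam T).count (i + 1) = mu.getD i 0) :
    lam.length = mu.length := by
  obtain ⟨hsort, hpos⟩ := hlam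
  by_cases hlnil : lam = []
  · subst hlnil
    have hword : vstWord [] T = [] := by
      simp [vstWord, vstTagged]
    cases hmunil : mu with
    | nil => simp [hmunil]
    | cons b mu' =>
      exfalso
      have h0 := hwt 0
      rw [hword, hmunil] at h0
      simp only [List.count_nil, List.getD_cons_zero] at h0
      have hb : 0 < b := hmu.2 b (by rw [hmunil]; exact List.mem_cons_self)
      omega
  · have hlpos : 0 < lam.length := List.length_pos_iff.mpr hlnil
    set ℓ := lam.length with hldef
    -- the bottom box of column 0
    have hsh : InShape lam (ℓ - 1) 0 := by
      unfold InShape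
      rw [List.getD_eq_getElem lam 0 (by omega)]
      exact hpos _ (List.getElem_mem (by omega))
    have hst : T.start (ℓ - 1) 0 = true := hT.2.2.2.2.1 _ hsh
    have hhead : lam.headD 0 = lam.getD 0 0 := by
      cases lam with
      | nil => rfl
      | cons a l => rfl
    have hc0 : (0 : ℕ) < lam.headD 0 := by
      rw [hhead]
      have := getD_anti hsort (Nat.zero_le (ℓ - 1))
      unfold InShape at hsh
      omega
    have hrh : ℓ - 1 < colHeight lam 0 := (lt_colHeight_iff hsort 0 (ℓ - 1)).mpr hsh
    have htmem : (T.entry (ℓ - 1) 0, ℓ - 1, 0) ∈ vstTagged lam T :=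
      mem_vstTagged_iff.mpr ⟨ℓ - 1, 0, hc0, hrh, hst, rfl⟩
    have hrowEq := rowEq ⟨hsort, hpos⟩ hT hhw
    have hent : T.entry (ℓ - 1) 0 = ℓ := by
      have := hrowEq (T.entry (ℓ - 1) 0) _ htmem rfl
      simp only at this
      omega
    -- ℓ ≤ mu.length
    have hmemw : (ℓ : ℕ) ∈ vstWord lam T := by
      simp only [vstWord, List.mem_map]
      exact ⟨_, htmem, hent⟩
    have hcount : 0 < (vstWord lam T).count ℓ := List.count_pos_iff.mpr hmemw
    have hgethw : (vstWord lam T).count ((ℓ - 1) + 1) = mu.getD (ℓ - 1) 0 := hwt (ℓ - 1)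
    have hgl : 0 < mu.getD (ℓ - 1) 0 := by
      rw [← hgethw]
      have : (ℓ - 1) + 1 = ℓ := by omega
      rw [this]
      exact hcount
    have hle1 : ℓ ≤ mu.length := by
      by_contra hcon
      rw [List.getD_eq_default mu 0 (by omega)] at hgl
      omega
    -- mu.length ≤ ℓ
    have hLpos : 0 < mu.length := by omega
    set L := mu.length with hLdef
    have hgL : 0 < mu.getD (L - 1) 0 := by
      rw [List.getD_eq_getElem mu 0 (by omega)]
      exact hmu.2 _ (List.getElem_mem (by omega))
    have hcountL : 0 < (vstWord lam T).count L := by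
      have h := hwt (L - 1)
      have hLL : (L - 1) + 1 = L := by omega
      rw [hLL] at h
      omega
    have hmemL : (L : ℕ) ∈ vstWord lam T := List.count_pos_iff.mp hcountL
    simp only [vstWord, List.mem_map] at hmemL
    obtain ⟨t, htmem', ht1⟩ := hmemL
    have hrow := hrowEq L t htmem' ht1
    obtain ⟨r, c, hc', hrh', hst', hteq⟩ := mem_vstTagged_iff.mp htmem'
    rw [hteq] at hrow
    simp only at hrow
    have hshape : InShape lam r c := (lt_colHeight_iff hsort c r).mp hrh'
    have hle2 : L ≤ ℓ := by
      by_contra hcon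
      have : lam.length ≤ r := by omega
      rw [InShape, List.getD_eq_default lam 0 this] at hshape
      omega
    omega
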